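/- Let C = Av(B) be a finitely based avoidance set of double ascents under the (value-)consecutive order, and let K = Av(W(B)) be the avoidance set of words over {l,r} under the consecutive factor order, where W(B) is the union of the word sets associated with the elements of B. Then C contains an infinite antichain if and only if K contains an infinite antichain. -/

import Mathlib

/-- The permutation (as the list of values read by position, 0-indexed) associated
with a word over `{l, r}` (encoded `l = true`, `r = false`). -/
def assocPerm (w : List Bool) : List ℕ :=
  ((List.range w.length).filter fun i => w.getD i false) ++
    ((List.range w.length).filter fun i => !(w.getD i false))

/-- The number of consecutive inversions (descents) of a sequence. -/
def descents (s : List ℕ) : ℕ :=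
  (s.zip s.tail).countP fun p => decide (p.2 < p.1)

/-- Two sequences are order-isomorphic. -/
def OrdIso (s t : List ℕ) : Prop :=
  s.length = t.length ∧ ∀ i j, i < s.length → j < s.length →
    (s.getD i 0 < s.getD j 0 ↔ t.getD i 0 < t.getD j 0)

/-- The value-consecutive order on permutations. -/
def ConsLE (s t : List ℕ) : Prop :=
  ∃ k : ℕ, OrdIso s (t.filter fun v => decide (k ≤ v ∧ v < k + s.length))

namespace S19

/-- window filter of a range -/
lemma range_filter_window (k m n : ℕ) :
    (List.range n).filter (fun v => decide (k ≤ v ∧ v < k + m)) =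
      (List.range (min m (n - k))).map (fun x => k + x) := by
  rcases le_or_gt k n with hk | hk
  · obtain ⟨t, rfl⟩ : ∃ t, n = k + t := ⟨n - k, by omega⟩
    rw [List.range_add, List.filter_append]
    have h1 : (List.range k).filter (fun v => decide (k ≤ v ∧ v < k + m)) = [] := by
      rw [List.filter_eq_nil_iff]
      intro a ha
      simp only [List.mem_range] at ha
      simp only [decide_eq_true_eq]; omega
    have h2 : (List.map (fun x => k + x) (List.range t)).filter
        (fun v => decide (k ≤ v ∧ v < k + m)) =
        (List.map (fun x => k + x) ((List.range t).filter (fun x => decide (x < m)))) := by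
      rw [List.filter_map]
      congr 1
      apply List.filter_congr
      intro x hx
      simp only [Function.comp]
      simp only [decide_eq_decide]; omega
    rw [h1, h2, List.nil_append]
    congr 1
    have : k + t - k = t := by omega
    rw [this]
    rcases le_or_gt t m with h | h
    · rw [min_eq_right h]
      apply List.filter_eq_self.2
      intro a ha
      simp only [List.mem_range] at ha
      simp only [decide_eq_true_eq]; omega
    · rw [min_eq_left h.le]
      have : t = m + (t - m) := by omega
      rw [this, List.range_add, List.filter_append]
      have e1 : (List.range m).filter (fun x => decide (x < m)) = List.range m := by
        apply List.filter_eq_self.2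
        intro a ha
        simp only [List.mem_range] at ha
        simpa
      have e2 : (List.map (fun x => m + x) (List.range (t - m))).filter
          (fun x => decide (x < m)) = [] := by
        rw [List.filter_eq_nil_iff]
        intro a ha
        simp only [List.mem_map, List.mem_range] at ha
        obtain ⟨b, _, rfl⟩ := ha
        simp
      rw [e1, e2, List.append_nil]
  · have h1 : (List.range n).filter (fun v => decide (k ≤ v ∧ v < k + m)) = [] := by
      rw [List.filter_eq_nil_iff]
      intro a ha
      simp only [List.mem_range] at ha
      simp only [decide_eq_true_eq]; omega
    have : n - k = 0 := by omega
    rw [h1, this]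
    simp

lemma assocPerm_perm (w : List Bool) : (assocPerm w).Perm (List.range w.length) :=
  List.filter_append_perm _ _

lemma assocPerm_length (w : List Bool) : (assocPerm w).length = w.length := by
  simpa using (assocPerm_perm w).length_eq

lemma length_filter_window (k m : ℕ) (t : List ℕ) (ht : t.Perm (List.range t.length)) :
    (t.filter (fun v => decide (k ≤ v ∧ v < k + m))).length = min m (t.length - k) := by
  rw [← List.countP_eq_length_filter, ht.countP_eq]
  have := congrArg List.length (range_filter_window k m t.length)
  simpa [← List.countP_eq_length_filter] using this

lemma filter_filter_window (n k m : ℕ) (h : k + m ≤ n) (q q'' : ℕ → Bool)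
    (hq : ∀ i, i < m → q (k + i) = q'' i) :
    (((List.range n).filter q).filter (fun v => decide (k ≤ v ∧ v < k + m))) =
      ((List.range m).filter q'').map (fun x => k + x) := by
  rw [List.filter_filter]
  have e1 : (List.range n).filter (fun a => decide (k ≤ a ∧ a < k + m) && q a)
      = ((List.range n).filter (fun v => decide (k ≤ v ∧ v < k + m))).filter q := by
    rw [List.filter_filter]
    apply List.filter_congr
    intro x _
    rw [Bool.and_comm]
  rw [e1, range_filter_window]
  have hmin : min m (n - k) = m := by omega
  rw [hmin, List.filter_map]
  congr 1
  apply List.filter_congr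
  intro x hx
  simp only [List.mem_range] at hx
  exact hq x hx

lemma take_drop_getD (w : List Bool) (k m i : ℕ) (h : k + m ≤ w.length) (hi : i < m) :
    ((w.drop k).take m).getD i false = w.getD (k + i) false := by
  have h1 : i < ((w.drop k).take m).length := by
    rw [List.length_take, List.length_drop]; omega
  have h2 : k + i < w.length := by omega
  rw [List.getD_eq_getElem _ _ h1, List.getD_eq_getElem _ _ h2,
    List.getElem_take, List.getElem_drop]

lemma assocPerm_filter_window (w : List Bool) (k m : ℕ) (h : k + m ≤ w.length) :
    (assocPerm w).filter (fun v => decide (k ≤ v ∧ v < k + m)) =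
      (assocPerm ((w.drop k).take m)).map (fun x => k + x) := by
  have hu : ((w.drop k).take m).length = m := by
    rw [List.length_take, List.length_drop]; omega
  unfold assocPerm
  rw [List.filter_append, List.map_append, hu]
  congr 1
  · exact filter_filter_window w.length k m h _ _
      (fun i hi => (take_drop_getD w k m i h hi).symm)
  · exact filter_filter_window w.length k m h _ _
      (fun i hi => by rw [take_drop_getD w k m i h hi])

lemma ordIso_symm {s t : List ℕ} (h : OrdIso s t) : OrdIso t s := by
  obtain ⟨hl, hi⟩ := h
  exact ⟨hl.symm, fun i j hi' hj' => (hi i j (hl ▸ hi') (hl ▸ hj')).symm⟩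

lemma ordIso_trans {s t u : List ℕ} (h1 : OrdIso s t) (h2 : OrdIso t u) : OrdIso s u := by
  obtain ⟨hl1, hi1⟩ := h1
  obtain ⟨hl2, hi2⟩ := h2
  exact ⟨hl1.trans hl2, fun i j hi' hj' =>
    (hi1 i j hi' hj').trans (hi2 i j (hl1 ▸ hi') (hl1 ▸ hj'))⟩

lemma ordIso_map_add (t : List ℕ) (k : ℕ) : OrdIso t (t.map (fun x => k + x)) := by
  refine ⟨by simp, fun i j hi hj => ?_⟩
  have hi' : i < (t.map (fun x => k + x)).length := by simpa using hi
  have hj' : j < (t.map (fun x => k + x)).length := by simpa using hj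
  rw [List.getD_eq_getElem _ _ hi, List.getD_eq_getElem _ _ hj,
    List.getD_eq_getElem _ _ hi', List.getD_eq_getElem _ _ hj',
    List.getElem_map, List.getElem_map]
  omega

lemma map_getD_range (l : List ℕ) : (List.range l.length).map (fun j => l.getD j 0) = l := by
  apply List.ext_getElem (by simp)
  intro i h1 h2
  rw [List.getElem_map, List.getElem_range, List.getD_eq_getElem _ _ h2]

lemma countP_eq_countP_range (l : List ℕ) (p : ℕ → Bool) :
    l.countP p = (List.range l.length).countP (fun j => p (l.getD j 0)) := by
  conv_lhs => rw [← map_getD_range l]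
  rw [List.countP_map]
  rfl

lemma countP_lt_range (v n : ℕ) (h : v ≤ n) :
    (List.range n).countP (fun x => decide (x < v)) = v := by
  obtain ⟨t, rfl⟩ : ∃ t, n = v + t := ⟨n - v, by omega⟩
  rw [List.range_add, List.countP_append]
  have e1 : (List.range v).countP (fun x => decide (x < v)) = v := by
    rw [List.countP_eq_length_filter]
    have : (List.range v).filter (fun x => decide (x < v)) = List.range v := by
      apply List.filter_eq_self.2
      intro a ha
      simp only [List.mem_range] at ha
      simp only [decide_eq_true_eq]; omega
    rw [this, List.length_range]
  have e2 : (List.map (fun x => v + x) (List.range t)).countP (fun x => decide (x < v)) = 0 := by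
    rw [List.countP_map]
    apply List.countP_eq_zero.2
    intro a _
    simp only [Function.comp, decide_eq_true_eq]
    omega
  rw [e1, e2]
  omega

lemma count_lt_self (l : List ℕ) (hl : l.Perm (List.range l.length)) (i : ℕ)
    (hi : i < l.length) : l.countP (fun x => decide (x < l.getD i 0)) = l.getD i 0 := by
  rw [hl.countP_eq]
  apply countP_lt_range
  have hm : l.getD i 0 ∈ l := by
    rw [List.getD_eq_getElem _ _ hi]
    exact List.getElem_mem hi
  have := hl.mem_iff.1 hm
  simp only [List.mem_range] at this
  omega

lemma ordIso_eq_of_perm {s t : List ℕ} (hs : s.Perm (List.range s.length))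
    (ht : t.Perm (List.range t.length)) (h : OrdIso s t) : s = t := by
  obtain ⟨hlen, hiso⟩ := h
  apply List.ext_getElem hlen
  intro i h1 h2
  have e1 : s[i] = s.countP (fun x => decide (x < s.getD i 0)) := by
    rw [count_lt_self s hs i h1, List.getD_eq_getElem _ _ h1]
  have e2 : t[i] = t.countP (fun x => decide (x < t.getD i 0)) := by
    rw [count_lt_self t ht i h2, List.getD_eq_getElem _ _ h2]
  rw [e1, e2, countP_eq_countP_range s, countP_eq_countP_range t, ← hlen]
  apply List.countP_congr
  intro j hj
  simp only [List.mem_range] at hj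
  simp only [decide_eq_true_eq]
  exact hiso j i hj h1

lemma consLE_of_infix {w w' : List Bool} (h : w <:+: w') :
    ConsLE (assocPerm w) (assocPerm w') := by
  obtain ⟨p, s, hps⟩ := h
  refine ⟨p.length, ?_⟩
  rw [assocPerm_length]
  have hkm : p.length + w.length ≤ w'.length := by
    rw [← hps]; simp; try omega
  have hdt : (w'.drop p.length).take w.length = w := by
    rw [← hps, List.append_assoc, List.drop_left, List.take_left]
  rw [assocPerm_filter_window w' p.length w.length hkm, hdt]
  exact ordIso_map_add _ _

lemma consLE_nil (t : List ℕ) : ConsLE [] t := by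
  refine ⟨0, ?_⟩
  have h : (t.filter fun v => decide (0 ≤ v ∧ v < 0 + List.length ([] : List ℕ))) = [] := by
    rw [List.filter_eq_nil_iff]
    intro a _
    simp
  rw [h]
  exact ⟨rfl, fun i j hi hj => by simp at hi⟩

lemma consLE_assocPerm {σ : List ℕ} {w' : List Bool} (hσ : σ.Perm (List.range σ.length))
    (hne : σ ≠ []) (h : ConsLE σ (assocPerm w')) :
    ∃ u, u <:+: w' ∧ u ≠ [] ∧ assocPerm u = σ := by
  obtain ⟨k, hiso⟩ := h
  have hm : 0 < σ.length := List.length_pos_iff.2 hne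
  have hperm : (assocPerm w').Perm (List.range (assocPerm w').length) := by
    rw [assocPerm_length]; exact assocPerm_perm w'
  have hlenf := hiso.1
  rw [length_filter_window k σ.length (assocPerm w') hperm, assocPerm_length] at hlenf
  have hkm : k + σ.length ≤ w'.length := by omega
  have hu : ((w'.drop k).take σ.length).length = σ.length := by
    rw [List.length_take, List.length_drop]; omega
  rw [assocPerm_filter_window w' k σ.length hkm] at hiso
  have h2 : OrdIso σ (assocPerm ((w'.drop k).take σ.length)) :=
    ordIso_trans hiso (ordIso_symm (ordIso_map_add _ k))
  have hup : (assocPerm ((w'.drop k).take σ.length)).Perm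
      (List.range (assocPerm ((w'.drop k).take σ.length)).length) := by
    rw [assocPerm_length]; exact assocPerm_perm _
  have heq : σ = assocPerm ((w'.drop k).take σ.length) := ordIso_eq_of_perm hσ hup h2
  refine ⟨(w'.drop k).take σ.length, ?_, ?_, heq.symm⟩
  · exact (List.take_prefix _ _).isInfix.trans (List.drop_suffix k w').isInfix
  · intro h0
    rw [h0] at hu
    simp at hu
    omega

lemma sorted_filter_range (n : ℕ) (p : ℕ → Bool) : ((List.range n).filter p).Pairwise (· < ·) :=
  List.pairwise_lt_range.filter p

lemma descents_cons_cons (a b : ℕ) (l : List ℕ) :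
    descents (a :: b :: l) = (if b < a then 1 else 0) + descents (b :: l) := by
  simp only [descents, List.tail_cons, List.zip_cons_cons, List.countP_cons]
  rcases lt_or_ge b a with h | h
  · simp [h]; try omega
  · simp [Nat.not_lt.2 h]; try omega

lemma descents_sorted {l : List ℕ} (h : l.Pairwise (· < ·)) : descents l = 0 := by
  induction l with
  | nil => rfl
  | cons a l ih =>
    cases l with
    | nil => rfl
    | cons b m =>
      have hab : a < b := (List.pairwise_cons.1 h).1 _ (by simp)
      rw [descents_cons_cons, ih (List.pairwise_cons.1 h).2]
      simp [Nat.not_lt.2 hab.le]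

lemma descents_append_le (s t : List ℕ) (hs : s.Pairwise (· < ·)) :
    descents (s ++ t) ≤ descents t + 1 := by
  induction s with
  | nil => simp
  | cons a s ih =>
    cases s with
    | nil =>
      cases t with
      | nil => simp [descents]
      | cons b t' =>
        rw [List.singleton_append, descents_cons_cons]
        split <;> omega
    | cons b s' =>
      rw [List.cons_append, List.cons_append, descents_cons_cons]
      have hab : a < b := (List.pairwise_cons.1 hs).1 _ (by simp)
      have := ih (List.pairwise_cons.1 hs).2
      rw [List.cons_append] at this
      simp [Nat.not_lt.2 hab.le]
      omega

lemma descents_assocPerm (w : List Bool) : descents (assocPerm w) ≤ 1 := by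
  have h1 := sorted_filter_range w.length (fun i => w.getD i false)
  have h2 := sorted_filter_range w.length (fun i => !(w.getD i false))
  have h3 := descents_append_le _ ((List.range w.length).filter (fun i => !(w.getD i false))) h1
  have h4 := descents_sorted h2
  unfold assocPerm
  omega

lemma sorted_nodup {l : List ℕ} (h : l.Pairwise (· < ·)) : l.Nodup :=
  h.imp (fun hab => Nat.ne_of_lt hab)

lemma filter_range_eq_of_sorted {A : List ℕ} (n : ℕ) (hA : A.Pairwise (· < ·))
    (p : ℕ → Bool) (hp : ∀ x, x < n → (p x = true ↔ x ∈ A)) (hmem : ∀ x ∈ A, x < n) :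
    (List.range n).filter p = A := by
  apply List.Perm.eq_of_pairwise (fun a b _ _ h1 h2 => absurd (h1.trans h2) (lt_irrefl a)) (sorted_filter_range n p) hA
  apply List.perm_of_nodup_nodup_toFinset_eq (List.nodup_range.filter p) (sorted_nodup hA)
  ext x
  simp only [List.mem_toFinset, List.mem_filter, List.mem_range]
  constructor
  · rintro ⟨hx, hpx⟩
    exact (hp x hx).1 hpx
  · intro hx
    exact ⟨hmem x hx, (hp x (hmem x hx)).2 hx⟩

lemma assocPerm_split (σ A D : List ℕ) (hσ : σ = A ++ D) (hA : A.Pairwise (· < ·))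
    (hD : D.Pairwise (· < ·)) (hperm : σ.Perm (List.range σ.length)) :
    assocPerm ((List.range σ.length).map (fun i => decide (i ∈ A))) = σ := by
  have hnd : σ.Nodup := hperm.symm.nodup List.nodup_range
  have hdisj : A.Disjoint D := List.disjoint_of_nodup_append (hσ ▸ hnd)
  have hmemσ : ∀ x, x ∈ σ ↔ x < σ.length := fun x => by
    rw [hperm.mem_iff, List.mem_range]
  have hw : ((List.range σ.length).map (fun i => decide (i ∈ A))).length = σ.length := by simp
  have hgd : ∀ i, i < σ.length →
      ((List.range σ.length).map (fun i => decide (i ∈ A))).getD i false = decide (i ∈ A) := by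
    intro i hi
    have hi' : i < ((List.range σ.length).map (fun i => decide (i ∈ A))).length := by simpa using hi
    rw [List.getD_eq_getElem _ _ hi', List.getElem_map, List.getElem_range]
  unfold assocPerm
  rw [hw]
  have e1 : (List.range σ.length).filter
      (fun i => ((List.range σ.length).map (fun i => decide (i ∈ A))).getD i false) = A := by
    rw [List.filter_congr (fun x hx => hgd x (List.mem_range.1 hx))]
    apply filter_range_eq_of_sorted _ hA
    · intro x _; simp
    · intro x hx
      exact (hmemσ x).1 (hσ ▸ List.mem_append_left D hx)
  have e2 : (List.range σ.length).filter
      (fun i => !((List.range σ.length).map (fun i => decide (i ∈ A))).getD i false) = D := by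
    rw [List.filter_congr (fun x hx => by rw [hgd x (List.mem_range.1 hx)])]
    apply filter_range_eq_of_sorted _ hD
    · intro x hxn
      have hxσ : x ∈ σ := (hmemσ x).2 hxn
      rw [hσ, List.mem_append] at hxσ
      simp only [Bool.not_eq_true', decide_eq_false_iff_not]
      constructor
      · intro hxA
        exact hxσ.resolve_left hxA
      · intro hxD hxA
        exact hdisj hxA hxD
    · intro x hx
      exact (hmemσ x).1 (hσ ▸ List.mem_append_right A hx)
  rw [e1, e2, ← hσ]

lemma two_le_countP {α : Type*} (l : List α) (p : α → Bool) (i j : ℕ) (hij : i < j)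
    (hj : j < l.length) (hpi : p (l[i]'(lt_trans hij hj)) = true) (hpj : p l[j] = true) :
    2 ≤ l.countP p := by
  have hsplit : l.countP p = (l.take j).countP p + (l.drop j).countP p := by
    conv_lhs => rw [← List.take_append_drop j l]
    rw [List.countP_append]
  have hil : i < (l.take j).length := by
    rw [List.length_take]; omega
  have h1 : 0 < (l.take j).countP p := by
    refine List.countP_pos_iff.2 ⟨(l.take j)[i], List.getElem_mem hil, ?_⟩
    rw [List.getElem_take]
    exact hpi
  have h2 : 0 < (l.drop j).countP p := by
    rw [List.drop_eq_getElem_cons hj, List.countP_cons]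
    simp [hpj]
  omega

def wOf (σ : List ℕ) : List Bool :=
  (List.range σ.length).map
    (fun i => decide (i ∈ σ.take ((σ.zip σ.tail).findIdx (fun p => decide (p.2 < p.1)) + 1)))

lemma assocPerm_wOf (σ : List ℕ) (hperm : σ.Perm (List.range σ.length))
    (hd : descents σ ≤ 1) : assocPerm (wOf σ) = σ := by
  have hnd : σ.Nodup := hperm.symm.nodup List.nodup_range
  set i0 := (σ.zip σ.tail).findIdx (fun p => decide (p.2 < p.1)) with hi0
  set t := i0 + 1 with ht
  have hzl : (σ.zip σ.tail).length = σ.length - 1 := by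
    rw [List.length_zip, List.length_tail]
    omega
  have hz : ∀ j (hj : j + 1 < σ.length),
      (σ.zip σ.tail)[j]'(by omega) = (σ[j]'(by omega), σ[j+1]'hj) := by
    intro j hj
    rw [List.getElem_zip, List.getElem_tail]
  have key : ∀ j (hj : j + 1 < σ.length), j ≠ i0 → σ[j]'(by omega) < σ[j+1]'hj := by
    intro j hj hne
    have hjz : j < (σ.zip σ.tail).length := by omega
    have hzj : (σ.zip σ.tail)[j]'hjz = (σ[j]'(by omega), σ[j+1]'hj) := hz j hj
    have hple : ¬ σ[j+1] < σ[j] := by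
      rcases lt_or_gt_of_ne hne with hlt | hgt
      · have h5 := List.not_of_lt_findIdx
          (p := fun p : ℕ × ℕ => decide (p.2 < p.1)) (xs := σ.zip σ.tail) hlt
        rw [hzj] at h5
        simpa using h5
      · by_contra hcon
        have hi0z : i0 < (σ.zip σ.tail).length := by omega
        have hpi0 : (fun p : ℕ × ℕ => decide (p.2 < p.1)) ((σ.zip σ.tail)[i0]) = true :=
          List.findIdx_getElem (w := hi0z)
        have hpj : (fun p : ℕ × ℕ => decide (p.2 < p.1)) ((σ.zip σ.tail)[j]'hjz) = true := by
          rw [hzj]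
          simpa using hcon
        have h2c := two_le_countP (σ.zip σ.tail) (fun p : ℕ × ℕ => decide (p.2 < p.1)) i0 j hgt hjz hpi0 hpj
        have hdd : descents σ = (σ.zip σ.tail).countP (fun p => decide (p.2 < p.1)) := rfl
        omega
    have hne2 : σ[j] ≠ σ[j+1] := by
      intro hEq
      have := (hnd.getElem_inj_iff).1 hEq
      omega
    omega
  have hA : (σ.take t).Pairwise (· < ·) := by
    rw [← List.isChain_iff_pairwise, List.isChain_iff_getElem]
    intro i hilen
    have h1 : i + 1 < (σ.take t).length := by omega
    have h3 : i + 1 < σ.length := by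
      rw [List.length_take] at h1; omega
    rw [List.getElem_take, List.getElem_take]
    apply key i h3
    rw [List.length_take] at h1
    omega
  have hD : (σ.drop t).Pairwise (· < ·) := by
    rw [← List.isChain_iff_pairwise, List.isChain_iff_getElem]
    intro i hilen
    have h1 : i + 1 < (σ.drop t).length := by omega
    rw [List.getElem_drop, List.getElem_drop]
    rw [List.length_drop] at h1
    have h3 : (t + i) + 1 < σ.length := by omega
    have hk := key (t + i) h3 (by omega)
    exact hk
  exact assocPerm_split σ (σ.take t) (σ.drop t) (List.take_append_drop t σ).symm hA hD hperm

lemma mem_firstFilter {v : List Bool} {i : ℕ} (hi : i < v.length) :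
    v[i] = true ↔ i ∈ (List.range v.length).filter (fun j => v.getD j false) := by
  rw [List.mem_filter]
  simp [List.mem_range, hi, List.getD_eq_getElem _ _ hi]

lemma sorted_double_append {A D A' D' : List ℕ} (h : A ++ D = A' ++ D')
    (hA : A.Pairwise (· < ·)) (hD : D.Pairwise (· < ·)) (hA' : A'.Pairwise (· < ·))
    (hlt : A.length < A'.length) : (A ++ D).Pairwise (· < ·) := by
  rw [← List.isChain_iff_pairwise, List.isChain_iff_getElem]
  intro i hilen
  have h2 : i + 1 < (A ++ D).length := by omega
  have h1 : i < (A ++ D).length := by omega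
  have hlen : (A ++ D).length = A.length + D.length := List.length_append
  rcases lt_trichotomy (i + 1) A.length with hc | hc | hc
  · rw [List.getElem_append_left (by omega : i < A.length),
      List.getElem_append_left hc]
    exact List.pairwise_iff_getElem.1 hA i (i+1) (by omega) hc (by omega)
  · have hlen' : (A' ++ D').length = A'.length + D'.length := List.length_append
    have hiA' : i + 1 < A'.length := by omega
    have e1 : (A ++ D)[i] = A'[i]'(by omega) := by
      rw [List.getElem_of_eq h h1]
      exact List.getElem_append_left (by omega)
    have e2 : (A ++ D)[i+1] = A'[i+1]'hiA' := by
      rw [List.getElem_of_eq h h2]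
      exact List.getElem_append_left hiA'
    rw [e1, e2]
    exact List.pairwise_iff_getElem.1 hA' i (i+1) (by omega) hiA' (by omega)
  · have hi' : A.length ≤ i := by omega
    rw [List.getElem_append_right hi', List.getElem_append_right (by omega : A.length ≤ i + 1)]
    apply List.pairwise_iff_getElem.1 hD (i - A.length) (i + 1 - A.length) (by omega) (by omega)
      (by omega)

lemma assocPerm_inj_or {u v : List Bool} (h : assocPerm u = assocPerm v) :
    u = v ∨ ∃ a c, v = List.replicate a true ++ List.replicate c false := by
  have hlen : u.length = v.length := by
    rw [← assocPerm_length u, ← assocPerm_length v, h]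
  have happ : ((List.range u.length).filter (fun j => u.getD j false)) ++
      ((List.range u.length).filter (fun j => !(u.getD j false))) =
      ((List.range v.length).filter (fun j => v.getD j false)) ++
      ((List.range v.length).filter (fun j => !(v.getD j false))) := h
  set Au := (List.range u.length).filter (fun j => u.getD j false) with hAu
  set Du := (List.range u.length).filter (fun j => !(u.getD j false)) with hDu
  set Av := (List.range v.length).filter (fun j => v.getD j false) with hAv
  set Dv := (List.range v.length).filter (fun j => !(v.getD j false)) with hDv
  have hsAu : Au.Pairwise (· < ·) := sorted_filter_range _ _
  have hsDu : Du.Pairwise (· < ·) := sorted_filter_range _ _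
  have hsAv : Av.Pairwise (· < ·) := sorted_filter_range _ _
  have hsDv : Dv.Pairwise (· < ·) := sorted_filter_range _ _
  have hvperm : (Av ++ Dv).Perm (List.range v.length) := assocPerm_perm v
  rcases lt_trichotomy Au.length Av.length with hc | hc | hc
  · -- sorted, hence Av ++ Dv = range, incForm
    have hsort : (Au ++ Du).Pairwise (· < ·) :=
      sorted_double_append happ hsAu hsDu hsAv hc
    rw [happ] at hsort
    have hrange : Av ++ Dv = List.range v.length :=
      List.Perm.eq_of_pairwise (fun a b _ _ h1 h2 => absurd (h1.trans h2) (lt_irrefl a)) hsort List.pairwise_lt_range hvperm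
    right
    have haled : Av.length ≤ v.length := by
      rw [hAv]
      have h5 := List.length_filter_le (fun j => v.getD j false) (List.range v.length)
      rw [List.length_range] at h5
      exact h5
    have hAvr : Av = List.range Av.length := by
      have h4 := congrArg (List.take Av.length) hrange
      rw [List.take_left, List.take_range, min_eq_left haled] at h4
      exact h4
    refine ⟨Av.length, v.length - Av.length, ?_⟩
    apply List.ext_getElem
    · rw [List.length_append, List.length_replicate, List.length_replicate]
      omega
    · intro i h1 h2
      rcases lt_or_ge i Av.length with hia | hia
      · have hl : i < (List.replicate Av.length true).length := by
          rw [List.length_replicate]; exact hia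
        rw [List.getElem_append_left hl, List.getElem_replicate]
        rw [mem_firstFilter h1, ← hAv, hAvr]
        rw [List.mem_range]
        exact hia
      · have hl : (List.replicate Av.length true).length ≤ i := by
          rw [List.length_replicate]; exact hia
        rw [List.getElem_append_right hl, List.getElem_replicate]
        have : ¬ (v[i] = true) := by
          rw [mem_firstFilter h1, ← hAv, hAvr, List.mem_range]
          omega
        simp only [Bool.not_eq_true] at this
        exact this
  · -- equal lengths: u = v
    left
    obtain ⟨hA, _⟩ := List.append_inj happ hc
    apply List.ext_getElem hlen
    intro i h1 h2
    rw [Bool.eq_iff_iff, mem_firstFilter h1, mem_firstFilter h2, ← hAu, ← hAv, hA]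
  · -- symmetric sorted case
    have hsort : (Av ++ Dv).Pairwise (· < ·) :=
      sorted_double_append happ.symm hsAv hsDv hsAu hc
    have hrange : Av ++ Dv = List.range v.length :=
      List.Perm.eq_of_pairwise (fun a b _ _ h1 h2 => absurd (h1.trans h2) (lt_irrefl a)) hsort List.pairwise_lt_range hvperm
    right
    have haled : Av.length ≤ v.length := by
      rw [hAv]
      have h5 := List.length_filter_le (fun j => v.getD j false) (List.range v.length)
      rw [List.length_range] at h5
      exact h5
    have hAvr : Av = List.range Av.length := by
      have h4 := congrArg (List.take Av.length) hrange
      rw [List.take_left, List.take_range, min_eq_left haled] at h4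
      exact h4
    refine ⟨Av.length, v.length - Av.length, ?_⟩
    apply List.ext_getElem
    · rw [List.length_append, List.length_replicate, List.length_replicate]
      omega
    · intro i h1 h2
      rcases lt_or_ge i Av.length with hia | hia
      · have hl : i < (List.replicate Av.length true).length := by
          rw [List.length_replicate]; exact hia
        rw [List.getElem_append_left hl, List.getElem_replicate]
        rw [mem_firstFilter h1, ← hAv, hAvr]
        rw [List.mem_range]
        exact hia
      · have hl : (List.replicate Av.length true).length ≤ i := by
          rw [List.length_replicate]; exact hia
        rw [List.getElem_append_right hl, List.getElem_replicate]
        have : ¬ (v[i] = true) := by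
          rw [mem_firstFilter h1, ← hAv, hAvr, List.mem_range]
          omega
        simp only [Bool.not_eq_true] at this
        exact this

lemma isPWO_univ_prod : (Set.univ : Set (ℕ × ℕ)).IsPWO := by
  have h : (Set.univ : Set ℕ).IsPWO := (Set.isWF_univ_iff.2 inferInstance).isPWO
  simpa [Set.univ_prod_univ] using h.prod h

end S19

open S19

/-- Let `B` be a finite set of (nonempty) double ascents,
`C = Av(B)` the corresponding avoidance set of double ascents under the
value-consecutive order, and `K = Av(W(B))` the avoidance set of words over
`{l, r}` under the contiguous factor order, where `W(B)` is the set of words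
associated with elements of `B`.  Then `C` contains an infinite antichain iff `K`
does. -/
theorem stmt19 (B : Set (List ℕ)) (hfin : B.Finite)
    (hB : ∀ σ ∈ B, σ ≠ [] ∧ σ.Perm (List.range σ.length) ∧ descents σ ≤ 1) :
    ((∃ f : ℕ → List ℕ,
        (∀ k, (f k).Perm (List.range (f k).length) ∧ descents (f k) ≤ 1 ∧
          ∀ σ ∈ B, ¬ ConsLE σ (f k)) ∧
        (∀ j k, j ≠ k → ¬ ConsLE (f j) (f k))) ↔
      (∃ g : ℕ → List Bool,
        (∀ k, ∀ w : List Bool, w ≠ [] → assocPerm w ∈ B → ¬ w <:+: g k) ∧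
        (∀ j k, j ≠ k → ¬ g j <:+: g k))) := by
  constructor
  · rintro ⟨f, hf1, hf2⟩
    refine ⟨fun k => wOf (f k), ?_, ?_⟩
    · intro k w _ hwB hinf
      have hcons := consLE_of_infix hinf
      rw [assocPerm_wOf (f k) (hf1 k).1 (hf1 k).2.1] at hcons
      exact (hf1 k).2.2 (assocPerm w) hwB hcons
    · intro j k hjk hinf
      have hcons := consLE_of_infix hinf
      rw [assocPerm_wOf (f j) (hf1 j).1 (hf1 j).2.1,
        assocPerm_wOf (f k) (hf1 k).1 (hf1 k).2.1] at hcons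
      exact hf2 j k hjk hcons
  · rintro ⟨g, hg1, hg2⟩
    set S : Set ℕ := {k | ∃ a c, g k = List.replicate a true ++ List.replicate c false} with hS
    have hSfin : S.Finite := by
      rcases Set.finite_or_infinite S with h | hinf
      · exact h
      exfalso
      set e := hinf.natEmbedding with he
      have hmem : ∀ n : ℕ, ∃ a c, g (e n) = List.replicate a true ++ List.replicate c false :=
        fun n => (e n).2
      choose a c hac using hmem
      obtain ⟨gg, hgg⟩ := isPWO_univ_prod.exists_monotone_subseq (f := fun n => (a n, c n))
        (fun n => trivial)
      have hmn : gg 0 < gg 1 := gg.strictMono (by norm_num)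
      have hle : (a (gg 0), c (gg 0)) ≤ (a (gg 1), c (gg 1)) := hgg (by norm_num)
      have h1 : a (gg 0) ≤ a (gg 1) := hle.1
      have h2 : c (gg 0) ≤ c (gg 1) := hle.2
      apply hg2 (e (gg 0)) (e (gg 1))
      · intro hh
        have := e.injective (Subtype.ext hh)
        omega
      · rw [hac (gg 0), hac (gg 1)]
        refine ⟨List.replicate (a (gg 1) - a (gg 0)) true,
          List.replicate (c (gg 1) - c (gg 0)) false, ?_⟩
        have e1 : List.replicate (a (gg 1)) true =
            List.replicate (a (gg 1) - a (gg 0)) true ++ List.replicate (a (gg 0)) true := by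
          rw [← List.replicate_add]
          congr 1
          omega
        have e2 : List.replicate (c (gg 1)) false =
            List.replicate (c (gg 0)) false ++ List.replicate (c (gg 1) - c (gg 0)) false := by
          rw [← List.replicate_add]
          congr 1
          omega
        rw [e1, e2]
        simp only [List.append_assoc]
    have hcomp : Sᶜ.Infinite := hSfin.infinite_compl
    set e2 := hcomp.natEmbedding with he2
    refine ⟨fun n => assocPerm (g (e2 n)), ?_, ?_⟩
    · intro k
      refine ⟨?_, descents_assocPerm _, ?_⟩
      · rw [assocPerm_length]
        exact assocPerm_perm _
      · intro σ hσB hcons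
        obtain ⟨hσne, hσperm, _⟩ := hB σ hσB
        obtain ⟨u, hu1, hu2, hu3⟩ := consLE_assocPerm hσperm hσne hcons
        exact hg1 _ u hu2 (hu3.symm ▸ hσB) hu1
    · intro j k hjk hcons
      have hgne : g (e2 j) ≠ [] := by
        intro hnil
        exact (e2 j).2 ⟨0, 0, by simp [hnil]⟩
      have hne : assocPerm (g (e2 j)) ≠ [] := by
        intro h0
        have hl := assocPerm_length (g (e2 j))
        rw [h0] at hl
        exact hgne (List.length_eq_zero_iff.1 hl.symm)
      have hperm : (assocPerm (g (e2 j))).Perm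
          (List.range (assocPerm (g (e2 j))).length) := by
        rw [assocPerm_length]
        exact assocPerm_perm _
      obtain ⟨u, hu1, hu2, hu3⟩ := consLE_assocPerm hperm hne hcons
      rcases assocPerm_inj_or hu3 with heq | hform
      · apply hg2 (e2 j) (e2 k)
        · intro hh
          exact hjk (e2.injective (Subtype.ext hh))
        · exact heq ▸ hu1
      · exact (e2 j).2 hform
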